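/- arXiv:1706.05259 — 2 statements merged into one kernel-verified Lean document; each statement's English description precedes it below -/
import Mathlib

section
/- Theorem 4 (Theorem 5.2: fixed-share tracking bound). Let T₂ ≥ 2, η > 0 and δ ∈ (0,1). For every action sequence (i_1,…,i_{T₂}) ∈ {1,2}^{T₂} that switches at most once (i.e. there exists s with 0 ≤ s ≤ T₂ such that i_t is constant for t ≤ s and constant for t > s), the fixed-share forecaster satisfies Σ_{t=1}^{T₂} ℓ̄_t − Σ_{t=1}^{T₂} ℓ_{i_t,t} ≤ (2/η) ln 2 + (1/η) ln(1/((δ/2)(1−δ)^{T₂−2})) + (η/8) T₂. -/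
lemma bernoulli_hoeffding {p : ℝ} (hp0 : 0 ≤ p) (hp1 : p ≤ 1) (h : ℝ) :
    Real.log (1 - p + p * Real.exp h) ≤ p * h + h ^ 2 / 8 := by
  rcases eq_or_lt_of_le hp0 with rfl | hp0
  · simp; positivity
  rcases eq_or_lt_of_le hp1 with rfl | hp1
  · simp [Real.log_exp]; nlinarith
  set q : ℝ := 1 - p with hq
  have hqpos : 0 < q := by simp [hq]; linarith
  have hD : ∀ x : ℝ, 0 < q + p * Real.exp x := fun x => by positivity
  set F : ℝ → ℝ := fun x => p * x + x ^ 2 / 8 - Real.log (q + p * Real.exp x) with hF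
  set G : ℝ → ℝ := fun x => p + x / 4 - p * Real.exp x / (q + p * Real.exp x) with hG
  have hDD : ∀ x : ℝ, HasDerivAt (fun y => q + p * Real.exp y) (p * Real.exp x) x := by
    intro x
    simpa using ((Real.hasDerivAt_exp x).const_mul p).const_add q
  have hFd : ∀ x : ℝ, HasDerivAt F (G x) x := by
    intro x
    have h1 : HasDerivAt (fun y : ℝ => p * y) p x := by
      simpa using (hasDerivAt_id x).const_mul p
    have h2 : HasDerivAt (fun y : ℝ => y ^ 2 / 8) (x / 4) x := by
      have := (hasDerivAt_pow 2 x).div_const 8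
      rw [show ((2:ℕ):ℝ) * x ^ (2 - 1) / 8 = x / 4 by push_cast; ring] at this; exact this
    have h3 : HasDerivAt (fun y => Real.log (q + p * Real.exp y))
        (p * Real.exp x / (q + p * Real.exp x)) x :=
      (hDD x).log (hD x).ne'
    exact (h1.add h2).sub h3
  have hGd : ∀ x : ℝ, HasDerivAt G
      (1 / 4 - (p * Real.exp x / (q + p * Real.exp x)) *
        (1 - p * Real.exp x / (q + p * Real.exp x))) x := by
    intro x
    have h1 : HasDerivAt (fun y : ℝ => p + y / 4) (1 / 4) x := by
      simpa using ((hasDerivAt_id x).div_const 4).const_add p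
    have h2 : HasDerivAt (fun y => p * Real.exp y / (q + p * Real.exp y))
        ((p * Real.exp x * (q + p * Real.exp x) - p * Real.exp x * (p * Real.exp x)) /
          (q + p * Real.exp x) ^ 2) x :=
      ((Real.hasDerivAt_exp x).const_mul p).div (hDD x) (hD x).ne'
    have heq : (p * Real.exp x * (q + p * Real.exp x) - p * Real.exp x * (p * Real.exp x)) /
          (q + p * Real.exp x) ^ 2
        = (p * Real.exp x / (q + p * Real.exp x)) *
          (1 - p * Real.exp x / (q + p * Real.exp x)) := by
      field_simp
    rw [heq] at h2
    exact h1.sub h2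
  have hGderiv : ∀ x : ℝ, 0 ≤ deriv G x := by
    intro x
    rw [(hGd x).deriv]
    nlinarith [sq_nonneg (p * Real.exp x / (q + p * Real.exp x) - 1 / 2)]
  have hGmono : Monotone G :=
    monotone_of_deriv_nonneg (fun x => (hGd x).differentiableAt) hGderiv
  have hG0 : G 0 = 0 := by
    simp [hG]
    field_simp
    simp [hq]
  have hFdiff : Differentiable ℝ F := fun x => (hFd x).differentiableAt
  have hF0 : F 0 = 0 := by simp [hF, hq]
  have key : 0 ≤ F h := by
    rcases le_total 0 h with hh | hh
    · have : MonotoneOn F (Set.Ici 0) := by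
        apply monotoneOn_of_deriv_nonneg (convex_Ici 0) hFdiff.continuous.continuousOn
          hFdiff.differentiableOn
        intro x hx
        rw [(hFd x).deriv]
        have : G 0 ≤ G x := hGmono (by
          simp only [interior_Ici, Set.mem_Ioi] at hx; linarith)
        linarith [hG0 ▸ this]
      have := this (Set.self_mem_Ici) (Set.mem_Ici.mpr hh) hh
      linarith [hF0 ▸ this]
    · have : AntitoneOn F (Set.Iic 0) := by
        apply antitoneOn_of_deriv_nonpos (convex_Iic 0) hFdiff.continuous.continuousOn
          hFdiff.differentiableOn
        intro x hx
        rw [(hFd x).deriv]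
        have : G x ≤ G 0 := hGmono (by
          simp only [interior_Iic, Set.mem_Iio] at hx; linarith)
        linarith [hG0 ▸ this]
      have := this (Set.mem_Iic.mpr hh) Set.self_mem_Iic hh
      linarith [hF0 ▸ this]
  have : Real.log (q + p * Real.exp h) ≤ p * h + h ^ 2 / 8 := by
    simp only [hF] at key; linarith
  simpa [hq] using this

lemma two_point_hoeffding {η w0 w1 x y : ℝ} (hw0 : 0 < w0) (hw1 : 0 < w1)
    (hx : x ∈ Set.Icc (0:ℝ) 1) (hy : y ∈ Set.Icc (0:ℝ) 1) :
    Real.log ((w0 * Real.exp (-η * x) + w1 * Real.exp (-η * y)) / (w0 + w1))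
      ≤ -η * ((w0 * x + w1 * y) / (w0 + w1)) + η ^ 2 / 8 := by
  have hW : (0:ℝ) < w0 + w1 := by linarith
  set p : ℝ := w1 / (w0 + w1) with hp
  have hp0 : 0 ≤ p := by positivity
  have hp1 : p ≤ 1 := by rw [hp, div_le_one hW]; linarith
  have hid : (w0 * Real.exp (-η * x) + w1 * Real.exp (-η * y)) / (w0 + w1)
      = Real.exp (-η * x) * (1 - p + p * Real.exp (η * x - η * y)) := by
    have he : Real.exp (η * x - η * y) = Real.exp (-η * y) / Real.exp (-η * x) := by
      rw [← Real.exp_sub]; ring_nf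
    rw [hp, he]
    have h0 := Real.exp_pos (-η * x)
    field_simp
    ring
  have hpos : 0 < 1 - p + p * Real.exp (η * x - η * y) := by
    have he := Real.exp_pos (η * x - η * y)
    have hpp : 0 < p := by positivity
    nlinarith [mul_pos hpp he]
  rw [hid, Real.log_mul (Real.exp_ne_zero _) hpos.ne', Real.log_exp]
  have hb := bernoulli_hoeffding hp0 hp1 (η * x - η * y)
  have hsq : (η * x - η * y) ^ 2 ≤ η ^ 2 := by
    have h1 : (x - y) ^ 2 ≤ 1 := by nlinarith [hx.1, hx.2, hy.1, hy.2]
    calc (η * x - η * y) ^ 2 = η ^ 2 * (x - y) ^ 2 := by ring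
    _ ≤ η ^ 2 * 1 := mul_le_mul_of_nonneg_left h1 (sq_nonneg η)
    _ = η ^ 2 := mul_one _
  have hfin : -η * x + (p * (η * x - η * y)) = -η * ((w0 * x + w1 * y) / (w0 + w1)) := by
    rw [hp]; field_simp; ring
  nlinarith

set_option maxHeartbeats 1000000 in
/-- **Theorem 4 (Theorem 5.2: fixed-share tracking bound).** For `T₂ ≥ 2`,
`η > 0`, `δ ∈ (0,1)`, and any action sequence `(i_1,…,i_{T₂}) ∈ {1,2}^{T₂}`
with at most one switch, the fixed-share forecaster satisfies
`Σ_t ℓ̄_t − Σ_t ℓ_{i_t,t}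
  ≤ (2/η) ln 2 + (1/η) ln (1/((δ/2)(1−δ)^{T₂−2})) + (η/8) T₂`. -/
theorem fixed_share_tracking_bound
    (T : ℕ) (hT : 2 ≤ T) (η δ : ℝ) (hη : 0 < η) (hδ : δ ∈ Set.Ioo (0 : ℝ) 1)
    (l : Fin 2 → ℕ → ℝ) (hl : ∀ i t, l i t ∈ Set.Icc (0 : ℝ) 1)
    (α v : Fin 2 → ℕ → ℝ)
    (hα0 : ∀ i, α i 0 = 1 / 2)
    (hv : ∀ i t, 1 ≤ t → v i t = α i (t - 1) * Real.exp (-η * l i t))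
    (hαt : ∀ i t, 1 ≤ t → α i t = δ * (v 0 t + v 1 t) / 2 + (1 - δ) * v i t)
    (i : ℕ → Fin 2)
    (hswitch : ∃ s ≤ T,
      (∀ t1 t2, 1 ≤ t1 → t1 ≤ s → 1 ≤ t2 → t2 ≤ s → i t1 = i t2) ∧
      (∀ t1 t2, s < t1 → t1 ≤ T → s < t2 → t2 ≤ T → i t1 = i t2)) :
    (∑ t ∈ Finset.Icc 1 T,
        (α 0 (t - 1) * l 0 t + α 1 (t - 1) * l 1 t) / (α 0 (t - 1) + α 1 (t - 1)))
      - ∑ t ∈ Finset.Icc 1 T, l (i t) t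
      ≤ (2 / η) * Real.log 2
        + (1 / η) * Real.log (1 / ((δ / 2) * (1 - δ) ^ (T - 2)))
        + (η / 8) * T := by
  obtain ⟨hδ0, hδ1⟩ := hδ
  have h1δ : (0:ℝ) < 1 - δ := by linarith
  have htwo : ∀ j : Fin 2, j = 0 ∨ j = 1 := by decide
  -- positivity of weights
  have hαpos : ∀ t (c : Fin 2), 0 < α c t := by
    intro t
    induction t with
    | zero => intro c; rw [hα0]; norm_num
    | succ n ih =>
      intro c
      have h1 : (1:ℕ) ≤ n + 1 := by omega
      have p0 : 0 < v 0 (n+1) := by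
        rw [hv 0 (n+1) h1]; simp only [Nat.add_sub_cancel]
        exact mul_pos (ih 0) (Real.exp_pos _)
      have p1 : 0 < v 1 (n+1) := by
        rw [hv 1 (n+1) h1]; simp only [Nat.add_sub_cancel]
        exact mul_pos (ih 1) (Real.exp_pos _)
      rw [hαt c (n+1) h1]
      rcases htwo c with rfl | rfl <;> nlinarith [mul_pos hδ0 p0, mul_pos hδ0 p1, mul_pos h1δ p0, mul_pos h1δ p1]
  -- three step inequalities
  have hkey : ∀ (c c' : Fin 2) (t : ℕ), 1 ≤ t →
      δ / 2 * (α c (t-1) * Real.exp (-η * l c t)) ≤ α c' t := by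
    intro c c' t ht
    have p0 := mul_pos (hαpos (t-1) 0) (Real.exp_pos (-η * l 0 t))
    have p1 := mul_pos (hαpos (t-1) 1) (Real.exp_pos (-η * l 1 t))
    rcases htwo c with rfl | rfl <;> rcases htwo c' with rfl | rfl <;>
      (rw [hαt _ t ht, hv 0 t ht, hv 1 t ht];
       nlinarith [mul_pos hδ0 p0, mul_pos hδ0 p1, mul_pos h1δ p0, mul_pos h1δ p1])
  have hsame : ∀ (c : Fin 2) (t : ℕ), 1 ≤ t →
      (1 - δ) * (α c (t-1) * Real.exp (-η * l c t)) ≤ α c t := by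
    intro c t ht
    have p0 := mul_pos (hαpos (t-1) 0) (Real.exp_pos (-η * l 0 t))
    have p1 := mul_pos (hαpos (t-1) 1) (Real.exp_pos (-η * l 1 t))
    rcases htwo c with rfl | rfl <;>
      (rw [hαt _ t ht, hv 0 t ht, hv 1 t ht];
       nlinarith [mul_pos hδ0 p0, mul_pos hδ0 p1, mul_pos h1δ p0, mul_pos h1δ p1])
  have hhalf : ∀ (c : Fin 2) (t : ℕ), 1 ≤ t →
      1 / 2 * (α c (t-1) * Real.exp (-η * l c t)) ≤ α c t := by
    intro c t ht
    have p0 := mul_pos (hαpos (t-1) 0) (Real.exp_pos (-η * l 0 t))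
    have p1 := mul_pos (hαpos (t-1) 1) (Real.exp_pos (-η * l 1 t))
    rcases htwo c with rfl | rfl <;>
      (rw [hαt _ t ht, hv 0 t ht, hv 1 t ht];
       nlinarith [mul_pos hδ0 p0, mul_pos hδ0 p1, mul_pos h1δ p0, mul_pos h1δ p1])
  -- run lemma
  have hrun : ∀ (c : Fin 2) (a b : ℕ), a ≤ b →
      (1 - δ) ^ (b - a) * Real.exp (-η * ∑ u ∈ Finset.Ioc a b, l c u) * α c a ≤ α c b := by
    intro c a b hab
    induction b, hab using Nat.le_induction with
    | base => simp
    | succ b hab ih =>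
      have hs : ∑ u ∈ Finset.Ioc a (b+1), l c u
          = (∑ u ∈ Finset.Ioc a b, l c u) + l c (b+1) := Finset.sum_Ioc_succ_top hab _
      have h1 := hsame c (b+1) (by omega)
      simp only [Nat.add_sub_cancel] at h1
      calc (1 - δ) ^ (b + 1 - a) * Real.exp (-η * ∑ u ∈ Finset.Ioc a (b+1), l c u) * α c a
          = (1 - δ) * (((1 - δ) ^ (b - a) * Real.exp (-η * ∑ u ∈ Finset.Ioc a b, l c u)
              * α c a) * Real.exp (-η * l c (b+1))) := by
            rw [hs, show b + 1 - a = (b - a) + 1 from by omega, pow_succ,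
              show -η * ((∑ u ∈ Finset.Ioc a b, l c u) + l c (b+1))
                = -η * (∑ u ∈ Finset.Ioc a b, l c u) + -η * l c (b+1) from by ring,
              Real.exp_add]
            ring
        _ ≤ (1 - δ) * (α c b * Real.exp (-η * l c (b+1))) := by
            exact mul_le_mul_of_nonneg_left
              (mul_le_mul_of_nonneg_right ih (Real.exp_pos _).le) h1δ.le
        _ ≤ α c (b+1) := h1
  -- upper (Hoeffding) bound
  have hup : ∀ n : ℕ, Real.log (α 0 n + α 1 n)
      ≤ -η * (∑ t ∈ Finset.Icc 1 n,
          (α 0 (t - 1) * l 0 t + α 1 (t - 1) * l 1 t) / (α 0 (t - 1) + α 1 (t - 1)))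
        + η ^ 2 / 8 * n := by
    intro n
    induction n with
    | zero => simp [hα0]; norm_num
    | succ n ih =>
      have h1 : (1:ℕ) ≤ n + 1 := by omega
      have hAn1 : α 0 (n+1) + α 1 (n+1)
          = α 0 n * Real.exp (-η * l 0 (n+1)) + α 1 n * Real.exp (-η * l 1 (n+1)) := by
        rw [hαt 0 (n+1) h1, hαt 1 (n+1) h1, hv 0 (n+1) h1, hv 1 (n+1) h1]
        simp only [Nat.add_sub_cancel]
        ring
      have h2p := two_point_hoeffding (η := η) (hαpos n 0) (hαpos n 1) (hl 0 (n+1)) (hl 1 (n+1))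
      have hnum : (0:ℝ) < α 0 n * Real.exp (-η * l 0 (n+1)) + α 1 n * Real.exp (-η * l 1 (n+1)) :=
        add_pos (mul_pos (hαpos n 0) (Real.exp_pos _)) (mul_pos (hαpos n 1) (Real.exp_pos _))
      have hden : (0:ℝ) < α 0 n + α 1 n := add_pos (hαpos n 0) (hαpos n 1)
      rw [Real.log_div hnum.ne' hden.ne', ← hAn1] at h2p
      rw [Finset.sum_Icc_succ_top h1]
      simp only [Nat.add_sub_cancel]
      push_cast
      linarith
  -- convert goal sums to Ioc
  have hIccIoc : Finset.Icc 1 T = Finset.Ioc 0 T := by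
    ext x; simp only [Finset.mem_Icc, Finset.mem_Ioc]; omega
  -- lower bound on final weight
  obtain ⟨s, hsT, hc1, hc2⟩ := hswitch
  have hlow : δ / 8 * ((1 - δ) ^ (T - 2)
      * Real.exp (-η * ∑ u ∈ Finset.Ioc 0 T, l (i u) u)) ≤ α (i T) T := by
    by_cases hcase : 2 ≤ s ∧ s < T
    · -- real switch in the middle
      obtain ⟨hs2, hsltT⟩ := hcase
      have hi1 : ∀ u, 1 ≤ u → u ≤ s → i u = i 1 := fun u h1 h2 => hc1 u 1 h1 h2 le_rfl (by omega)
      have hi2 : ∀ u, s < u → u ≤ T → i u = i T := fun u h1 h2 => hc2 u T h1 h2 hsltT le_rfl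
      have st1 : 1 / 4 * Real.exp (-η * l (i 1) 1) ≤ α (i 1) 1 := by
        have h := hhalf (i 1) 1 le_rfl
        rw [show (1:ℕ) - 1 = 0 from rfl, hα0] at h
        calc 1 / 4 * Real.exp (-η * l (i 1) 1)
            = 1 / 2 * (1 / 2 * Real.exp (-η * l (i 1) 1)) := by ring
          _ ≤ α (i 1) 1 := h
      have run1 := hrun (i 1) 1 (s-1) (by omega)
      have hS1 : ∑ u ∈ Finset.Ioc 1 (s-1), l (i 1) u
          = ∑ u ∈ Finset.Ioc 1 (s-1), l (i u) u := by
        refine Finset.sum_congr rfl fun u hu => ?_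
        obtain ⟨h1, h2⟩ := Finset.mem_Ioc.mp hu
        rw [hi1 u (by omega) (by omega)]
      rw [hS1, show s - 1 - 1 = s - 2 from by omega] at run1
      have stS := hkey (i 1) (i T) s (by omega)
      rw [show l (i 1) s = l (i s) s from by rw [hi1 s (by omega) le_rfl]] at stS
      have run2 := hrun (i T) s T (by omega)
      have hS2 : ∑ u ∈ Finset.Ioc s T, l (i T) u
          = ∑ u ∈ Finset.Ioc s T, l (i u) u := by
        refine Finset.sum_congr rfl fun u hu => ?_
        obtain ⟨h1, h2⟩ := Finset.mem_Ioc.mp hu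
        rw [hi2 u h1 h2]
      rw [hS2] at run2
      -- split the total sum
      have hsplit : ∑ u ∈ Finset.Ioc 0 T, l (i u) u
          = l (i 1) 1 + (∑ u ∈ Finset.Ioc 1 (s-1), l (i u) u)
            + l (i s) s + ∑ u ∈ Finset.Ioc s T, l (i u) u := by
        rw [← Finset.sum_Ioc_consecutive _ (show (0:ℕ) ≤ s from by omega)
            (show s ≤ T from by omega)]
        rw [← Finset.sum_Ioc_consecutive _ (show (0:ℕ) ≤ s - 1 from by omega)
            (show s - 1 ≤ s from by omega)]
        rw [← Finset.sum_Ioc_consecutive _ (show (0:ℕ) ≤ 1 from by omega)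
            (show 1 ≤ s - 1 from by omega)]
        have e1 : Finset.Ioc (0:ℕ) 1 = {1} := by
          ext x; simp only [Finset.mem_Ioc, Finset.mem_singleton]; omega
        have e2 : Finset.Ioc (s-1) s = {s} := by
          ext x; simp only [Finset.mem_Ioc, Finset.mem_singleton]; omega
        rw [e1, e2, Finset.sum_singleton, Finset.sum_singleton]
      have hpow : (1 - δ) ^ (T - 2) = (1 - δ) ^ (s - 2) * (1 - δ) ^ (T - s) := by
        rw [← pow_add]; congr 1; omega
      have hC : (0:ℝ) ≤ (1 - δ) ^ (s - 2) * Real.exp (-η * ∑ u ∈ Finset.Ioc 1 (s-1), l (i u) u) :=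
        mul_nonneg (pow_nonneg h1δ.le _) (Real.exp_pos _).le
      have hD : (0:ℝ) ≤ (1 - δ) ^ (T - s) * Real.exp (-η * ∑ u ∈ Finset.Ioc s T, l (i u) u) :=
        mul_nonneg (pow_nonneg h1δ.le _) (Real.exp_pos _).le
      have B1 : ((1 - δ) ^ (s - 2) * Real.exp (-η * ∑ u ∈ Finset.Ioc 1 (s-1), l (i u) u))
          * (1 / 4 * Real.exp (-η * l (i 1) 1)) ≤ α (i 1) (s-1) := by
        refine le_trans ?_ run1
        exact mul_le_mul_of_nonneg_left st1 hC
      have B2 : δ / 2 * ((((1 - δ) ^ (s - 2)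
            * Real.exp (-η * ∑ u ∈ Finset.Ioc 1 (s-1), l (i u) u))
            * (1 / 4 * Real.exp (-η * l (i 1) 1))) * Real.exp (-η * l (i s) s))
          ≤ α (i T) s := by
        refine le_trans ?_ stS
        refine mul_le_mul_of_nonneg_left ?_ (by linarith)
        exact mul_le_mul_of_nonneg_right B1 (Real.exp_pos _).le
      calc δ / 8 * ((1 - δ) ^ (T - 2) * Real.exp (-η * ∑ u ∈ Finset.Ioc 0 T, l (i u) u))
          = ((1 - δ) ^ (T - s) * Real.exp (-η * ∑ u ∈ Finset.Ioc s T, l (i u) u))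
            * (δ / 2 * ((((1 - δ) ^ (s - 2)
              * Real.exp (-η * ∑ u ∈ Finset.Ioc 1 (s-1), l (i u) u))
              * (1 / 4 * Real.exp (-η * l (i 1) 1))) * Real.exp (-η * l (i s) s))) := by
            rw [hsplit, hpow,
              show -η * (l (i 1) 1 + (∑ u ∈ Finset.Ioc 1 (s-1), l (i u) u)
                  + l (i s) s + ∑ u ∈ Finset.Ioc s T, l (i u) u)
                = -η * l (i 1) 1 + (-η * (∑ u ∈ Finset.Ioc 1 (s-1), l (i u) u)
                  + (-η * l (i s) s + -η * ∑ u ∈ Finset.Ioc s T, l (i u) u)) from by ring,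
              Real.exp_add, Real.exp_add, Real.exp_add]
            ring
        _ ≤ ((1 - δ) ^ (T - s) * Real.exp (-η * ∑ u ∈ Finset.Ioc s T, l (i u) u))
            * α (i T) s := mul_le_mul_of_nonneg_left B2 hD
        _ ≤ α (i T) T := run2
    · -- no real switch: i is constant on [2, T]
      have hconst : ∀ u, 2 ≤ u → u ≤ T → i u = i T := by
        intro u hu2 huT
        rcases (show s ≤ 1 ∨ s = T from by omega) with h | h
        · exact hc2 u T (by omega) huT (by omega) le_rfl
        · exact hc1 u T (by omega) (by omega) (by omega) (by omega)
      have st1 : δ / 4 * Real.exp (-η * l (i 1) 1) ≤ α (i T) 1 := by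
        have h := hkey (i 1) (i T) 1 le_rfl
        rw [show (1:ℕ) - 1 = 0 from rfl, hα0] at h
        calc δ / 4 * Real.exp (-η * l (i 1) 1)
            = δ / 2 * (1 / 2 * Real.exp (-η * l (i 1) 1)) := by ring
          _ ≤ α (i T) 1 := h
      have st2 : δ / 8 * (Real.exp (-η * l (i 1) 1) * Real.exp (-η * l (i 2) 2))
          ≤ α (i T) 2 := by
        have h := hhalf (i T) 2 (by omega)
        rw [show (2:ℕ) - 1 = 1 from rfl] at h
        rw [show l (i 2) 2 = l (i T) 2 from by rw [hconst 2 le_rfl hT]]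
        calc δ / 8 * (Real.exp (-η * l (i 1) 1) * Real.exp (-η * l (i T) 2))
            = 1 / 2 * ((δ / 4 * Real.exp (-η * l (i 1) 1)) * Real.exp (-η * l (i T) 2)) := by
              ring
          _ ≤ 1 / 2 * (α (i T) 1 * Real.exp (-η * l (i T) 2)) := by
              refine mul_le_mul_of_nonneg_left ?_ (by norm_num)
              exact mul_le_mul_of_nonneg_right st1 (Real.exp_pos _).le
          _ ≤ α (i T) 2 := h
      have run := hrun (i T) 2 T hT
      have hS : ∑ u ∈ Finset.Ioc 2 T, l (i T) u = ∑ u ∈ Finset.Ioc 2 T, l (i u) u := by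
        refine Finset.sum_congr rfl fun u hu => ?_
        obtain ⟨h1, h2⟩ := Finset.mem_Ioc.mp hu
        rw [hconst u (by omega) h2]
      rw [hS] at run
      have hsplit : ∑ u ∈ Finset.Ioc 0 T, l (i u) u
          = l (i 1) 1 + l (i 2) 2 + ∑ u ∈ Finset.Ioc 2 T, l (i u) u := by
        rw [← Finset.sum_Ioc_consecutive _ (show (0:ℕ) ≤ 2 from by omega) hT]
        rw [← Finset.sum_Ioc_consecutive _ (show (0:ℕ) ≤ 1 from by omega)
            (show (1:ℕ) ≤ 2 from by omega)]
        have e1 : Finset.Ioc (0:ℕ) 1 = {1} := by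
          ext x; simp only [Finset.mem_Ioc, Finset.mem_singleton]; omega
        have e2 : Finset.Ioc (1:ℕ) 2 = {2} := by
          ext x; simp only [Finset.mem_Ioc, Finset.mem_singleton]; omega
        rw [e1, e2, Finset.sum_singleton, Finset.sum_singleton]
      have hD : (0:ℝ) ≤ (1 - δ) ^ (T - 2) * Real.exp (-η * ∑ u ∈ Finset.Ioc 2 T, l (i u) u) :=
        mul_nonneg (pow_nonneg h1δ.le _) (Real.exp_pos _).le
      calc δ / 8 * ((1 - δ) ^ (T - 2) * Real.exp (-η * ∑ u ∈ Finset.Ioc 0 T, l (i u) u))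
          = ((1 - δ) ^ (T - 2) * Real.exp (-η * ∑ u ∈ Finset.Ioc 2 T, l (i u) u))
            * (δ / 8 * (Real.exp (-η * l (i 1) 1) * Real.exp (-η * l (i 2) 2))) := by
            rw [hsplit,
              show -η * (l (i 1) 1 + l (i 2) 2 + ∑ u ∈ Finset.Ioc 2 T, l (i u) u)
                = -η * l (i 1) 1 + (-η * l (i 2) 2
                  + -η * ∑ u ∈ Finset.Ioc 2 T, l (i u) u) from by ring,
              Real.exp_add, Real.exp_add]
            ring
        _ ≤ ((1 - δ) ^ (T - 2) * Real.exp (-η * ∑ u ∈ Finset.Ioc 2 T, l (i u) u))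
            * α (i T) 2 := mul_le_mul_of_nonneg_left st2 hD
        _ ≤ α (i T) T := run
  -- take logs of the lower bound
  have hAT : δ / 8 * ((1 - δ) ^ (T - 2)
      * Real.exp (-η * ∑ u ∈ Finset.Ioc 0 T, l (i u) u)) ≤ α 0 T + α 1 T := by
    refine le_trans hlow ?_
    have h0 := hαpos T 0
    have h1 := hαpos T 1
    rcases htwo (i T) with h | h <;> rw [h] <;> linarith
  have hprodpos : (0:ℝ) < δ / 8 * ((1 - δ) ^ (T - 2)
      * Real.exp (-η * ∑ u ∈ Finset.Ioc 0 T, l (i u) u)) :=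
    mul_pos (by linarith) (mul_pos (pow_pos h1δ _) (Real.exp_pos _))
  have hloglow : Real.log δ - 3 * Real.log 2 + (T - 2 : ℕ) * Real.log (1 - δ)
      + (-η * ∑ u ∈ Finset.Ioc 0 T, l (i u) u) ≤ Real.log (α 0 T + α 1 T) := by
    have h := Real.log_le_log hprodpos hAT
    rw [Real.log_mul (by positivity) (by positivity), Real.log_mul (by positivity)
      (Real.exp_ne_zero _), Real.log_exp, Real.log_pow, Real.log_div hδ0.ne' (by norm_num),
      show Real.log 8 = 3 * Real.log 2 from by
        rw [show (8:ℝ) = 2 ^ 3 from by norm_num, Real.log_pow]; push_cast; ring] at h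
    linarith
  -- combine
  have hupT := hup T
  have hkey2 : η * (∑ t ∈ Finset.Icc 1 T,
        (α 0 (t - 1) * l 0 t + α 1 (t - 1) * l 1 t) / (α 0 (t - 1) + α 1 (t - 1)))
      - η * (∑ u ∈ Finset.Ioc 0 T, l (i u) u)
      ≤ 3 * Real.log 2 - Real.log δ - (T - 2 : ℕ) * Real.log (1 - δ) + η ^ 2 / 8 * T := by
    linarith
  have hgoal_rhs : Real.log (1 / ((δ / 2) * (1 - δ) ^ (T - 2)))
      = Real.log 2 - Real.log δ - (T - 2 : ℕ) * Real.log (1 - δ) := by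
    rw [one_div, Real.log_inv, Real.log_mul (by positivity) (pow_ne_zero _ h1δ.ne'),
      Real.log_div hδ0.ne' two_ne_zero, Real.log_pow]
    ring
  rw [hIccIoc, hgoal_rhs]
  have hfinal : (∑ t ∈ Finset.Icc 1 T,
        (α 0 (t - 1) * l 0 t + α 1 (t - 1) * l 1 t) / (α 0 (t - 1) + α 1 (t - 1)))
      - (∑ u ∈ Finset.Ioc 0 T, l (i u) u)
      ≤ (3 * Real.log 2 - Real.log δ - (T - 2 : ℕ) * Real.log (1 - δ) + η ^ 2 / 8 * T) / η := by
    rw [le_div_iff₀ hη, sub_mul]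
    nlinarith [hkey2]
  have heq : (2 / η) * Real.log 2
      + (1 / η) * (Real.log 2 - Real.log δ - (T - 2 : ℕ) * Real.log (1 - δ))
      + (η / 8) * T
      = (3 * Real.log 2 - Real.log δ - (T - 2 : ℕ) * Real.log (1 - δ) + η ^ 2 / 8 * T) / η := by
    field_simp
    ring
  rw [hIccIoc] at hfinal
  linarith [hfinal, heq.ge]
end

section
/- Theorem 2 (FESL-s regret bound). Let T₂ ≥ 3 and set δ = 1/(T₂ − 1) and η = √((8/T₂)(2 ln 2 + (T₂ − 1) H(1/(T₂ − 1)))). Then the expected cumulative loss of the fixed-share forecaster satisfies Σ_{t=1}^{T₂} ℓ̄_t ≤ min_{0 ≤ s ≤ T₂} L^s + √((T₂/2)(2 ln 2 + H(δ)/δ)), where L^s = Σ_{t=1}^{s} ℓ_{1,t} + Σ_{t=s+1}^{T₂} ℓ_{2,t} is the cumulative loss of following expert 1 up to round s and expert 2 afterwards, and H(x) = −x ln x − (1−x) ln(1−x) is the binary entropy function. -/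
set_option maxHeartbeats 1000000

lemma fesl_D_pos (p : ℝ) (hp0 : 0 ≤ p) (hp1 : p ≤ 1) (y : ℝ) :
    0 < 1 - p + p * Real.exp y := by
  rcases le_total (Real.exp y) 1 with h | h
  · nlinarith [Real.exp_pos y]
  · nlinarith [Real.exp_pos y]

lemma fesl_hoeff_core (p x : ℝ) (hp0 : 0 ≤ p) (hp1 : p ≤ 1) :
    Real.log (1 - p + p * Real.exp x) ≤ p * x + x ^ 2 / 8 := by
  have hD := fesl_D_pos p hp0 hp1
  set G : ℝ → ℝ := fun y => p * y + y ^ 2 / 8 - Real.log (1 - p + p * Real.exp y) with hGdef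
  set G' : ℝ → ℝ := fun y => p + y / 4 - p * Real.exp y / (1 - p + p * Real.exp y) with hG'def
  have hDder : ∀ y : ℝ, HasDerivAt (fun z : ℝ => 1 - p + p * Real.exp z) (p * Real.exp y) y := by
    intro y
    simpa using ((Real.hasDerivAt_exp y).const_mul p).const_add (1 - p)
  have hGder : ∀ y : ℝ, HasDerivAt G (G' y) y := by
    intro y
    have h2 : HasDerivAt (fun z : ℝ => Real.log (1 - p + p * Real.exp z))
        (p * Real.exp y / (1 - p + p * Real.exp y)) y := (hDder y).log (hD y).ne'
    have h3 : HasDerivAt (fun z : ℝ => p * z + z ^ 2 / 8) (p + y / 4) y := by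
      have := ((hasDerivAt_id y).const_mul p).add ((hasDerivAt_pow 2 y).div_const 8)
      refine this.congr_deriv ?_
      simp; ring
    exact h3.sub h2
  have hG'der : ∀ y : ℝ, HasDerivAt G'
      ((p * Real.exp y / (1 - p + p * Real.exp y) - 1 / 2) ^ 2) y := by
    intro y
    have hq : HasDerivAt (fun z : ℝ => p * Real.exp z / (1 - p + p * Real.exp z))
        ((p * Real.exp y * (1 - p + p * Real.exp y) - p * Real.exp y * (p * Real.exp y)) /
          (1 - p + p * Real.exp y) ^ 2) y :=
      ((Real.hasDerivAt_exp y).const_mul p).div (hDder y) (hD y).ne'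
    have h3 : HasDerivAt (fun z : ℝ => p + z / 4) (1 / 4 : ℝ) y := by
      simpa using ((hasDerivAt_id y).div_const 4).const_add p
    have := h3.sub hq
    refine this.congr_deriv ?_
    have hne := (hD y).ne'
    field_simp
    ring
  have hG'mono : Monotone G' :=
    monotone_of_hasDerivAt_nonneg hG'der (fun y => sq_nonneg _)
  have hG'0 : G' 0 = 0 := by
    simp only [hG'def, Real.exp_zero, mul_one]
    have h : 1 - p + p = 1 := by ring
    rw [h]; simp
  have hGcont : Continuous G :=
    (Differentiable.continuous (fun y => (hGder y).differentiableAt))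
  have hG0 : G 0 = 0 := by
    simp only [hGdef, Real.exp_zero, mul_one]
    have h : 1 - p + p = 1 := by ring
    rw [h]; simp
  have key : ∀ y : ℝ, 0 ≤ G y := by
    intro y
    rcases le_total 0 y with h | h
    · have hmono : MonotoneOn G (Set.Ici (0 : ℝ)) := by
        apply monotoneOn_of_deriv_nonneg (convex_Ici 0) hGcont.continuousOn
          (fun z _ => ((hGder z).differentiableAt).differentiableWithinAt)
        intro z hz
        rw [(hGder z).deriv]
        have hz0 : (0 : ℝ) ≤ z := le_of_lt (by simpa using hz)
        calc (0 : ℝ) = G' 0 := hG'0.symm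
          _ ≤ G' z := hG'mono hz0
      have := hmono Set.self_mem_Ici (Set.mem_Ici.mpr h) h
      linarith [hG0 ▸ this]
    · have hanti : AntitoneOn G (Set.Iic (0 : ℝ)) := by
        apply antitoneOn_of_deriv_nonpos (convex_Iic 0) hGcont.continuousOn
          (fun z _ => ((hGder z).differentiableAt).differentiableWithinAt)
        intro z hz
        rw [(hGder z).deriv]
        have hz0 : z ≤ 0 := le_of_lt (by simpa using hz)
        calc G' z ≤ G' 0 := hG'mono hz0
          _ = 0 := hG'0
      have := hanti (Set.mem_Iic.mpr h) Set.self_mem_Iic h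
      linarith [hG0 ▸ this]
  have := key x
  simp only [hGdef] at this
  linarith

lemma fesl_log_mix_le (p u w : ℝ) (hp0 : 0 ≤ p) (hp1 : p ≤ 1) :
    Real.log (p * Real.exp u + (1 - p) * Real.exp w)
      ≤ p * u + (1 - p) * w + (u - w) ^ 2 / 8 := by
  have hD := fesl_D_pos p hp0 hp1 (u - w)
  have h := fesl_hoeff_core p (u - w) hp0 hp1
  have key : p * Real.exp u + (1 - p) * Real.exp w
      = (1 - p + p * Real.exp (u - w)) * Real.exp w := by
    rw [Real.exp_sub]
    field_simp
    ring
  rw [key, Real.log_mul hD.ne' (Real.exp_ne_zero w), Real.log_exp]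
  have hr : p * (u - w) + w = p * u + (1 - p) * w := by ring
  linarith

/-- **Theorem 2 (FESL-s regret bound).** For `T₂ ≥ 3`, with
`δ = 1/(T₂−1)` and `η = √((8/T₂)(2 ln 2 + (T₂−1) H(1/(T₂−1))))`, the expected
cumulative loss of the fixed-share forecaster satisfies
`Σ_{t=1}^{T₂} ℓ̄_t ≤ min_{0 ≤ s ≤ T₂} L^s + √((T₂/2)(2 ln 2 + H(δ)/δ))`,
where `L^s = Σ_{t≤s} ℓ_{1,t} + Σ_{t>s} ℓ_{2,t}` and `H` is the binary
entropy function. -/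
theorem fesl_s_regret_bound
    (T : ℕ) (hT : 3 ≤ T)
    (H : ℝ → ℝ)
    (hH : ∀ x : ℝ, H x = -x * Real.log x - (1 - x) * Real.log (1 - x))
    (δ η : ℝ)
    (hδ : δ = 1 / ((T : ℝ) - 1))
    (hη : η = Real.sqrt (8 / (T : ℝ) *
      (2 * Real.log 2 + ((T : ℝ) - 1) * H (1 / ((T : ℝ) - 1)))))
    (l : Fin 2 → ℕ → ℝ) (hl : ∀ i t, l i t ∈ Set.Icc (0 : ℝ) 1)
    (α v : Fin 2 → ℕ → ℝ)
    (hα0 : ∀ i, α i 0 = 1 / 2)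
    (hv : ∀ i t, 1 ≤ t → v i t = α i (t - 1) * Real.exp (-η * l i t))
    (hαt : ∀ i t, 1 ≤ t → α i t = δ * (v 0 t + v 1 t) / 2 + (1 - δ) * v i t) :
    ∑ t ∈ Finset.Icc 1 T,
        (α 0 (t - 1) * l 0 t + α 1 (t - 1) * l 1 t) / (α 0 (t - 1) + α 1 (t - 1))
      ≤ (Finset.Icc 0 T).inf' (Finset.nonempty_Icc.mpr (Nat.zero_le T))
          (fun s => (∑ t ∈ Finset.Icc 1 s, l 0 t) + ∑ t ∈ Finset.Icc (s + 1) T, l 1 t)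
        + Real.sqrt ((T : ℝ) / 2 * (2 * Real.log 2 + H δ / δ)) := by
  obtain ⟨r, rfl⟩ : ∃ r, T = r + 3 := ⟨T - 3, by omega⟩
  set T : ℕ := r + 3 with hTdef
  have hl0 : ∀ (i : Fin 2) t, 0 ≤ l i t := fun i t => (hl i t).1
  have hl1 : ∀ (i : Fin 2) t, l i t ≤ 1 := fun i t => (hl i t).2
  have hTR : (3 : ℝ) ≤ (T : ℝ) := by
    have h3 : (3 : ℕ) ≤ T := by omega
    exact_mod_cast h3
  have hTpos : (0 : ℝ) < (T : ℝ) := by linarith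
  have hT1pos : (0 : ℝ) < (T : ℝ) - 1 := by linarith
  have hδpos : 0 < δ := by rw [hδ]; positivity
  have hδhalf : δ ≤ 1 / 2 := by
    rw [hδ, div_le_div_iff₀ hT1pos (by norm_num)]
    linarith
  have h1δ : (0 : ℝ) < 1 - δ := by linarith
  have hαpos : ∀ t (i : Fin 2), 0 < α i t := by
    intro t
    induction t with
    | zero => intro i; rw [hα0]; norm_num
    | succ k ih =>
      have hv' : ∀ j : Fin 2, 0 < v j (k + 1) := by
        intro j
        rw [hv j (k + 1) (by omega)]
        simp only [Nat.add_sub_cancel]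
        exact mul_pos (ih j) (Real.exp_pos _)
      intro i
      rw [hαt i (k + 1) (by omega)]
      have h0 := hv' 0
      have h1 := hv' 1
      have h2 := hv' i
      nlinarith [mul_pos hδpos (add_pos h0 h1), mul_pos h1δ h2]
  have hvpos : ∀ (j : Fin 2) (k : ℕ), 0 < v j (k + 1) := by
    intro j k
    rw [hv j (k + 1) (by omega)]
    simp only [Nat.add_sub_cancel]
    exact mul_pos (hαpos k j) (Real.exp_pos _)
  have hSpos : ∀ t, 0 < α 0 t + α 1 t := fun t => add_pos (hαpos t 0) (hαpos t 1)
  have hSstep : ∀ k : ℕ, α 0 (k + 1) + α 1 (k + 1)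
      = α 0 k * Real.exp (-η * l 0 (k + 1)) + α 1 k * Real.exp (-η * l 1 (k + 1)) := by
    intro k
    have h0 := hv 0 (k + 1) (by omega)
    have h1 := hv 1 (k + 1) (by omega)
    simp only [Nat.add_sub_cancel] at h0 h1
    rw [hαt 0 (k + 1) (by omega), hαt 1 (k + 1) (by omega), h0, h1]
    ring
  have upper : ∀ N : ℕ, Real.log (α 0 N + α 1 N) ≤
      -η * (∑ t ∈ Finset.Icc 1 N,
        (α 0 (t - 1) * l 0 t + α 1 (t - 1) * l 1 t) / (α 0 (t - 1) + α 1 (t - 1)))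
      + (N : ℝ) * η ^ 2 / 8 := by
    intro N
    induction N with
    | zero =>
      rw [hα0 0, hα0 1, show (1:ℝ)/2 + 1/2 = 1 from by norm_num, Real.log_one]
      simp
    | succ k ih =>
      have hA := hαpos k 0
      have hB := hαpos k 1
      have hAB := hSpos k
      set A := α 0 k with hAdef
      set B := α 1 k with hBdef
      set a := l 0 (k + 1) with hadef
      set b := l 1 (k + 1) with hbdef
      have hp0 : 0 ≤ A / (A + B) := by positivity
      have hp1 : A / (A + B) ≤ 1 := by
        rw [div_le_one hAB]; linarith
      have e0 := Real.exp_pos (-η * a)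
      have e1 := Real.exp_pos (-η * b)
      have key : α 0 (k + 1) + α 1 (k + 1)
          = (A + B) * (A / (A + B) * Real.exp (-η * a)
            + (1 - A / (A + B)) * Real.exp (-η * b)) := by
        rw [hSstep k, ← hadef, ← hbdef]
        field_simp
        rw [← hAdef, ← hBdef]
        ring
      have hmixpos : 0 < A / (A + B) * Real.exp (-η * a)
          + (1 - A / (A + B)) * Real.exp (-η * b) := by
        have h1p : 0 ≤ 1 - A / (A + B) := by linarith
        rcases le_total (Real.exp (-η * a)) (Real.exp (-η * b)) with hc | hc
        · nlinarith
        · nlinarith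
      have hmix := fesl_log_mix_le (A / (A + B)) (-η * a) (-η * b) hp0 hp1
      have heq : A / (A + B) * (-η * a) + (1 - A / (A + B)) * (-η * b)
          = -(η * ((A * a + B * b) / (A + B))) := by
        field_simp
        ring
      have hsq : (-η * a - -η * b) ^ 2 / 8 ≤ η ^ 2 / 8 := by
        have h1 : (a - b) ^ 2 ≤ 1 := by
          nlinarith [hl0 0 (k+1), hl1 0 (k+1), hl0 1 (k+1), hl1 1 (k+1)]
        have h2 : (-η * a - -η * b) ^ 2 = η ^ 2 * (a - b) ^ 2 := by ring
        nlinarith [sq_nonneg η]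
      have step : Real.log (α 0 (k + 1) + α 1 (k + 1)) ≤ Real.log (A + B)
          - η * ((A * a + B * b) / (A + B)) + η ^ 2 / 8 := by
        rw [key, Real.log_mul hAB.ne' hmixpos.ne']
        rw [heq] at hmix
        linarith
      have hsum : ∑ t ∈ Finset.Icc 1 (k + 1),
            (α 0 (t - 1) * l 0 t + α 1 (t - 1) * l 1 t) / (α 0 (t - 1) + α 1 (t - 1))
          = (∑ t ∈ Finset.Icc 1 k,
            (α 0 (t - 1) * l 0 t + α 1 (t - 1) * l 1 t) / (α 0 (t - 1) + α 1 (t - 1)))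
            + (A * a + B * b) / (A + B) := by
        rw [Finset.sum_Icc_succ_top (by omega)]
        simp only [Nat.add_sub_cancel, hAdef, hBdef, hadef, hbdef]
      rw [hsum]
      push_cast
      have hdist : -η * ((∑ t ∈ Finset.Icc 1 k,
            (α 0 (t - 1) * l 0 t + α 1 (t - 1) * l 1 t) / (α 0 (t - 1) + α 1 (t - 1)))
            + (A * a + B * b) / (A + B))
          = -η * (∑ t ∈ Finset.Icc 1 k,
            (α 0 (t - 1) * l 0 t + α 1 (t - 1) * l 1 t) / (α 0 (t - 1) + α 1 (t - 1)))
            - η * ((A * a + B * b) / (A + B)) := by ring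
      have hdist2 : ((k : ℝ) + 1) * η ^ 2 / 8 = (k : ℝ) * η ^ 2 / 8 + η ^ 2 / 8 := by ring
      linarith [ih, step, hdist, hdist2]
  have hstay : ∀ (i : Fin 2) (k : ℕ),
      (1 - δ) * (α i k * Real.exp (-η * l i (k + 1))) ≤ α i (k + 1) := by
    intro i k
    have hvi := hv i (k + 1) (by omega)
    simp only [Nat.add_sub_cancel] at hvi
    rw [hαt i (k + 1) (by omega), hvi]
    have h0 := hvpos 0 k
    have h1 := hvpos 1 k
    linarith [mul_pos hδpos (add_pos h0 h1)]
  have hswitch : ∀ (i j : Fin 2) (k : ℕ),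
      δ / 2 * (α j k * Real.exp (-η * l j (k + 1))) ≤ α i (k + 1) := by
    intro i j k
    have hvj := hv j (k + 1) (by omega)
    simp only [Nat.add_sub_cancel] at hvj
    rw [hαt i (k + 1) (by omega), ← hvj]
    have h0 := hvpos 0 k
    have h1 := hvpos 1 k
    have hi := hvpos i k
    have hji : v j (k + 1) ≤ v 0 (k + 1) + v 1 (k + 1) := by
      fin_cases j
      · exact le_add_of_nonneg_right h1.le
      · exact le_add_of_nonneg_left h0.le
    nlinarith [mul_le_mul_of_nonneg_left hji hδpos.le, mul_pos h1δ hi]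
  have hfinal : ∀ (j : Fin 2) (k : ℕ),
      α j k * Real.exp (-η * l j (k + 1)) ≤ α 0 (k + 1) + α 1 (k + 1) := by
    intro j k
    rw [hSstep k]
    have h0 := mul_pos (hαpos k 0) (Real.exp_pos (-η * l 0 (k + 1)))
    have h1 := mul_pos (hαpos k 1) (Real.exp_pos (-η * l 1 (k + 1)))
    fin_cases j
    · exact le_add_of_nonneg_right h1.le
    · exact le_add_of_nonneg_left h0.le
  have claimA : ∀ (i : Fin 2) (t : ℕ),
      1 / 2 * (1 - δ) ^ t * Real.exp (-η * ∑ u ∈ Finset.Icc 1 t, l i u) ≤ α i t := by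
    intro i t
    induction t with
    | zero => simp [hα0]
    | succ k ih =>
      have hsum : ∑ u ∈ Finset.Icc 1 (k + 1), l i u
          = (∑ u ∈ Finset.Icc 1 k, l i u) + l i (k + 1) :=
        Finset.sum_Icc_succ_top (by omega) _
      calc 1 / 2 * (1 - δ) ^ (k + 1) * Real.exp (-η * ∑ u ∈ Finset.Icc 1 (k + 1), l i u)
          = (1 - δ) * ((1 / 2 * (1 - δ) ^ k * Real.exp (-η * ∑ u ∈ Finset.Icc 1 k, l i u))
            * Real.exp (-η * l i (k + 1))) := by
            rw [hsum, show -η * ((∑ u ∈ Finset.Icc 1 k, l i u) + l i (k + 1))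
              = -η * (∑ u ∈ Finset.Icc 1 k, l i u) + -η * l i (k + 1) from by ring,
              Real.exp_add]
            ring
        _ ≤ (1 - δ) * (α i k * Real.exp (-η * l i (k + 1))) := by
            apply mul_le_mul_of_nonneg_left _ h1δ.le
            exact mul_le_mul_of_nonneg_right ih (Real.exp_pos _).le
        _ ≤ α i (k + 1) := hstay i k
  obtain ⟨s, hsmem, hinf⟩ := Finset.exists_mem_eq_inf' (Finset.nonempty_Icc.mpr (Nat.zero_le T))
    (fun s => (∑ t ∈ Finset.Icc 1 s, l 0 t) + ∑ t ∈ Finset.Icc (s + 1) T, l 1 t)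
  have hsT : s ≤ T := (Finset.mem_Icc.mp hsmem).2
  set Ls : ℝ := (∑ t ∈ Finset.Icc 1 s, l 0 t) + ∑ t ∈ Finset.Icc (s + 1) T, l 1 t with hLs
  have hconst : δ / 4 * (1 - δ) ^ (r + 1) ≤ 1 / 2 * (1 - δ) ^ (r + 2) := by
    have hpow : (1 - δ) ^ (r + 2) = (1 - δ) * (1 - δ) ^ (r + 1) := by ring
    rw [hpow]
    have hp : (0 : ℝ) ≤ (1 - δ) ^ (r + 1) := by positivity
    nlinarith
  have lower : δ / 4 * (1 - δ) ^ (r + 1) * Real.exp (-η * Ls) ≤ α 0 T + α 1 T := by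
    rcases Nat.lt_or_ge s 1 with hs0 | hs1
    · have hs0' : s = 0 := by omega
      subst hs0'
      have hLs' : Ls = ∑ t ∈ Finset.Icc 1 T, l 1 t := by
        rw [hLs]; simp
      have hcA := claimA 1 (r + 2)
      have hfin := hfinal 1 (r + 2)
      have hsum : ∑ u ∈ Finset.Icc 1 (r + 3), l 1 u
          = (∑ u ∈ Finset.Icc 1 (r + 2), l 1 u) + l 1 (r + 3) :=
        Finset.sum_Icc_succ_top (by omega) _
      have hchain : 1 / 2 * (1 - δ) ^ (r + 2) * Real.exp (-η * ∑ u ∈ Finset.Icc 1 (r + 3), l 1 u)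
          ≤ α 0 (r + 3) + α 1 (r + 3) := by
        calc 1 / 2 * (1 - δ) ^ (r + 2) * Real.exp (-η * ∑ u ∈ Finset.Icc 1 (r + 3), l 1 u)
            = (1 / 2 * (1 - δ) ^ (r + 2) * Real.exp (-η * ∑ u ∈ Finset.Icc 1 (r + 2), l 1 u))
              * Real.exp (-η * l 1 (r + 3)) := by
              rw [hsum, show -η * ((∑ u ∈ Finset.Icc 1 (r + 2), l 1 u) + l 1 (r + 3))
                = -η * (∑ u ∈ Finset.Icc 1 (r + 2), l 1 u) + -η * l 1 (r + 3) from by ring,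
                Real.exp_add]
              ring
          _ ≤ α 1 (r + 2) * Real.exp (-η * l 1 (r + 3)) :=
              mul_le_mul_of_nonneg_right hcA (Real.exp_pos _).le
          _ ≤ α 0 (r + 3) + α 1 (r + 3) := hfin
      have hE : (0:ℝ) < Real.exp (-η * Ls) := Real.exp_pos _
      have hstep := mul_le_mul_of_nonneg_right hconst hE.le
      rw [hLs'] at hstep ⊢
      exact le_trans hstep hchain
    · rcases Nat.lt_or_ge s T with hsT' | hsT''
      · obtain ⟨q, rfl⟩ : ∃ q, s = q + 1 := ⟨s - 1, by omega⟩
        have hqr : q ≤ r + 1 := by omega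
        have hsw : δ / 4 * (1 - δ) ^ q * Real.exp (-η * ∑ u ∈ Finset.Icc 1 (q + 1), l 0 u)
            ≤ α 1 (q + 1) := by
          have hcA := claimA 0 q
          have hsum : ∑ u ∈ Finset.Icc 1 (q + 1), l 0 u
              = (∑ u ∈ Finset.Icc 1 q, l 0 u) + l 0 (q + 1) :=
            Finset.sum_Icc_succ_top (by omega) _
          calc δ / 4 * (1 - δ) ^ q * Real.exp (-η * ∑ u ∈ Finset.Icc 1 (q + 1), l 0 u)
              = δ / 2 * ((1 / 2 * (1 - δ) ^ q * Real.exp (-η * ∑ u ∈ Finset.Icc 1 q, l 0 u))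
                * Real.exp (-η * l 0 (q + 1))) := by
                rw [hsum, show -η * ((∑ u ∈ Finset.Icc 1 q, l 0 u) + l 0 (q + 1))
                  = -η * (∑ u ∈ Finset.Icc 1 q, l 0 u) + -η * l 0 (q + 1) from by ring,
                  Real.exp_add]
                ring
            _ ≤ δ / 2 * (α 0 q * Real.exp (-η * l 0 (q + 1))) := by
                apply mul_le_mul_of_nonneg_left _ (by positivity)
                exact mul_le_mul_of_nonneg_right hcA (Real.exp_pos _).le
            _ ≤ α 1 (q + 1) := hswitch 1 0 q
        have claimB : ∀ d : ℕ,
            δ / 4 * (1 - δ) ^ (q + d) * Real.exp (-η * ((∑ u ∈ Finset.Icc 1 (q + 1), l 0 u)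
              + ∑ u ∈ Finset.Icc (q + 2) (q + 1 + d), l 1 u)) ≤ α 1 (q + 1 + d) := by
          intro d
          induction d with
          | zero => simpa using hsw
          | succ e ihe =>
            have hsum : ∑ u ∈ Finset.Icc (q + 2) (q + 1 + (e + 1)), l 1 u
                = (∑ u ∈ Finset.Icc (q + 2) (q + 1 + e), l 1 u) + l 1 (q + 1 + e + 1) := by
              have h := Finset.sum_Icc_succ_top (a := q + 2) (b := q + 1 + e) (by omega) (l 1)
              rw [show q + 1 + (e + 1) = q + 1 + e + 1 from by omega, h]
            calc δ / 4 * (1 - δ) ^ (q + (e + 1))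
                * Real.exp (-η * ((∑ u ∈ Finset.Icc 1 (q + 1), l 0 u)
                  + ∑ u ∈ Finset.Icc (q + 2) (q + 1 + (e + 1)), l 1 u))
                = (1 - δ) * ((δ / 4 * (1 - δ) ^ (q + e)
                  * Real.exp (-η * ((∑ u ∈ Finset.Icc 1 (q + 1), l 0 u)
                    + ∑ u ∈ Finset.Icc (q + 2) (q + 1 + e), l 1 u)))
                  * Real.exp (-η * l 1 (q + 1 + e + 1))) := by
                  rw [hsum, show -η * ((∑ u ∈ Finset.Icc 1 (q + 1), l 0 u)
                    + ((∑ u ∈ Finset.Icc (q + 2) (q + 1 + e), l 1 u) + l 1 (q + 1 + e + 1)))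
                    = -η * ((∑ u ∈ Finset.Icc 1 (q + 1), l 0 u)
                      + ∑ u ∈ Finset.Icc (q + 2) (q + 1 + e), l 1 u)
                      + -η * l 1 (q + 1 + e + 1) from by ring, Real.exp_add]
                  ring
              _ ≤ (1 - δ) * (α 1 (q + 1 + e) * Real.exp (-η * l 1 (q + 1 + e + 1))) := by
                  apply mul_le_mul_of_nonneg_left _ h1δ.le
                  exact mul_le_mul_of_nonneg_right ihe (Real.exp_pos _).le
              _ ≤ α 1 (q + 1 + e + 1) := hstay 1 (q + 1 + e)
        have hd := claimB (r + 1 - q)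
        rw [show q + 1 + (r + 1 - q) = r + 2 from by omega,
          show q + (r + 1 - q) = r + 1 from by omega] at hd
        have hfin := hfinal 1 (r + 2)
        have hsum2 : ∑ u ∈ Finset.Icc (q + 2) (r + 3), l 1 u
            = (∑ u ∈ Finset.Icc (q + 2) (r + 2), l 1 u) + l 1 (r + 3) :=
          Finset.sum_Icc_succ_top (by omega) _
        have hLs' : Ls = (∑ u ∈ Finset.Icc 1 (q + 1), l 0 u)
            + ((∑ u ∈ Finset.Icc (q + 2) (r + 2), l 1 u) + l 1 (r + 3)) := by
          rw [hLs, ← hsum2]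
        calc δ / 4 * (1 - δ) ^ (r + 1) * Real.exp (-η * Ls)
            = (δ / 4 * (1 - δ) ^ (r + 1)
              * Real.exp (-η * ((∑ u ∈ Finset.Icc 1 (q + 1), l 0 u)
                + ∑ u ∈ Finset.Icc (q + 2) (r + 2), l 1 u)))
              * Real.exp (-η * l 1 (r + 3)) := by
              rw [hLs', show -η * ((∑ u ∈ Finset.Icc 1 (q + 1), l 0 u)
                + ((∑ u ∈ Finset.Icc (q + 2) (r + 2), l 1 u) + l 1 (r + 3)))
                = -η * ((∑ u ∈ Finset.Icc 1 (q + 1), l 0 u)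
                  + ∑ u ∈ Finset.Icc (q + 2) (r + 2), l 1 u)
                  + -η * l 1 (r + 3) from by ring, Real.exp_add]
              ring
          _ ≤ α 1 (r + 2) * Real.exp (-η * l 1 (r + 3)) :=
              mul_le_mul_of_nonneg_right hd (Real.exp_pos _).le
          _ ≤ α 0 (r + 3) + α 1 (r + 3) := hfin
      · have hs' : s = T := by omega
        subst hs'
        have hLs' : Ls = ∑ t ∈ Finset.Icc 1 T, l 0 t := by
          rw [hLs]
          have hempty : Finset.Icc (T + 1) T = ∅ := Finset.Icc_eq_empty (by omega)
          rw [hempty]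
          simp
        have hcA := claimA 0 (r + 2)
        have hfin := hfinal 0 (r + 2)
        have hsum : ∑ u ∈ Finset.Icc 1 (r + 3), l 0 u
            = (∑ u ∈ Finset.Icc 1 (r + 2), l 0 u) + l 0 (r + 3) :=
          Finset.sum_Icc_succ_top (by omega) _
        have hchain : 1 / 2 * (1 - δ) ^ (r + 2)
            * Real.exp (-η * ∑ u ∈ Finset.Icc 1 (r + 3), l 0 u)
            ≤ α 0 (r + 3) + α 1 (r + 3) := by
          calc 1 / 2 * (1 - δ) ^ (r + 2) * Real.exp (-η * ∑ u ∈ Finset.Icc 1 (r + 3), l 0 u)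
              = (1 / 2 * (1 - δ) ^ (r + 2) * Real.exp (-η * ∑ u ∈ Finset.Icc 1 (r + 2), l 0 u))
                * Real.exp (-η * l 0 (r + 3)) := by
                rw [hsum, show -η * ((∑ u ∈ Finset.Icc 1 (r + 2), l 0 u) + l 0 (r + 3))
                  = -η * (∑ u ∈ Finset.Icc 1 (r + 2), l 0 u) + -η * l 0 (r + 3) from by ring,
                  Real.exp_add]
                ring
            _ ≤ α 0 (r + 2) * Real.exp (-η * l 0 (r + 3)) :=
                mul_le_mul_of_nonneg_right hcA (Real.exp_pos _).le
            _ ≤ α 0 (r + 3) + α 1 (r + 3) := hfin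
        have hE : (0:ℝ) < Real.exp (-η * Ls) := Real.exp_pos _
        have hstep := mul_le_mul_of_nonneg_right hconst hE.le
        rw [hLs'] at hstep ⊢
        exact le_trans hstep hchain
  have hlow : Real.log (δ / 4) + ((T : ℝ) - 2) * Real.log (1 - δ) - η * Ls
      ≤ Real.log (α 0 T + α 1 T) := by
    have hposL : (0 : ℝ) < δ / 4 * (1 - δ) ^ (r + 1) * Real.exp (-η * Ls) := by positivity
    have hlog := Real.log_le_log hposL lower
    rw [Real.log_mul (by positivity) (Real.exp_ne_zero _),
      Real.log_mul (by positivity) (by positivity), Real.log_pow, Real.log_exp] at hlog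
    have hcast : ((r + 1 : ℕ) : ℝ) = (T : ℝ) - 2 := by
      rw [hTdef]; push_cast; ring
    rw [hcast] at hlog
    linarith
  set C : ℝ := 2 * Real.log 2 + ((T : ℝ) - 1) * H δ with hCdef
  have hδT : ((T : ℝ) - 1) * δ = 1 := by
    rw [hδ]; field_simp
  have hHδ : ((T : ℝ) - 1) * H δ = -Real.log δ - ((T : ℝ) - 2) * Real.log (1 - δ) := by
    rw [hH δ]
    linear_combination (Real.log (1 - δ) - Real.log δ) * hδT
  have hlog4 : Real.log (δ / 4) = Real.log δ - 2 * Real.log 2 := by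
    rw [Real.log_div hδpos.ne' (by norm_num), show (4 : ℝ) = 2 ^ 2 from by norm_num,
      Real.log_pow]
    push_cast; ring
  have hCalt : -(Real.log (δ / 4) + ((T : ℝ) - 2) * Real.log (1 - δ)) = C := by
    rw [hCdef, hHδ, hlog4]; ring
  have hHpos : 0 ≤ H δ := by
    rw [hH δ]
    have h1 : Real.log δ ≤ 0 := Real.log_nonpos hδpos.le (by linarith)
    have h2 : Real.log (1 - δ) ≤ 0 := Real.log_nonpos h1δ.le (by linarith)
    nlinarith
  have hCpos : 0 < C := by
    have hlog2 : 0 < Real.log 2 := Real.log_pos (by norm_num)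
    have hnn : 0 ≤ ((T : ℝ) - 1) * H δ := mul_nonneg (by linarith) hHpos
    rw [hCdef]; linarith
  have hηC : η = Real.sqrt (8 / (T : ℝ) * C) := by
    rw [hη, hCdef, hδ]
  have hη2 : η ^ 2 = 8 / (T : ℝ) * C := by
    rw [hηC]
    exact Real.sq_sqrt (by positivity)
  have hηpos : 0 < η := by
    rw [hηC]
    exact Real.sqrt_pos.mpr (by positivity)
  have hup := upper T
  have hTη : (T : ℝ) * η ^ 2 / 8 = C := by
    rw [hη2]; field_simp
  have hmain : η * (∑ t ∈ Finset.Icc 1 T,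
      (α 0 (t - 1) * l 0 t + α 1 (t - 1) * l 1 t) / (α 0 (t - 1) + α 1 (t - 1)))
      ≤ η * Ls + 2 * C := by
    have h1 := hlow.trans hup
    linarith [hCalt, hTη]
  have hfin : (∑ t ∈ Finset.Icc 1 T,
      (α 0 (t - 1) * l 0 t + α 1 (t - 1) * l 1 t) / (α 0 (t - 1) + α 1 (t - 1)))
      ≤ Ls + 2 * C / η := by
    have h3 : (∑ t ∈ Finset.Icc 1 T,
        (α 0 (t - 1) * l 0 t + α 1 (t - 1) * l 1 t) / (α 0 (t - 1) + α 1 (t - 1))) - Ls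
        ≤ 2 * C / η := by
      rw [le_div_iff₀ hηpos]
      nlinarith [hmain]
    linarith
  have hsqrt : Real.sqrt ((T : ℝ) / 2 * (2 * Real.log 2 + H δ / δ)) = 2 * C / η := by
    have hHd : H δ / δ = ((T : ℝ) - 1) * H δ := by
      have h1d : 1 / δ = (T : ℝ) - 1 := by rw [hδ, one_div_one_div]
      rw [div_eq_mul_one_div, h1d]
      ring
    rw [hHd, ← hCdef]
    have harg : (T : ℝ) / 2 * C = (2 * C / η) ^ 2 := by
      have h4 : (2 * C / η) ^ 2 = 4 * C ^ 2 / η ^ 2 := by ring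
      rw [h4, hη2]
      field_simp
      ring
    rw [harg, Real.sqrt_sq (by positivity)]
  rw [hinf]
  show (∑ t ∈ Finset.Icc 1 T,
      (α 0 (t - 1) * l 0 t + α 1 (t - 1) * l 1 t) / (α 0 (t - 1) + α 1 (t - 1)))
      ≤ ((∑ t ∈ Finset.Icc 1 s, l 0 t) + ∑ t ∈ Finset.Icc (s + 1) T, l 1 t)
        + Real.sqrt ((T : ℝ) / 2 * (2 * Real.log 2 + H δ / δ))
  rw [hsqrt, ← hLs]
  exact hfin
end
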